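/- Let φ be the morphism a ↦ ab, b ↦ a and x: ℤ → {a,b} the bi-infinite fixed point of φ² with seed b.a. Let A be the DFAO with states {START, a, b}, input alphabet {0,1}, initial state START, transitions START →0 a, START →1 b, a →0 a, a →1 b, b →0 a, and output the final state reached. Then for all n ∈ ℤ, x_n = A(rep_F(n)), where the automaton reads rep_F(n) from the most significant digit. -/

import Mathlib

/-- Fibonacci sequence with `F 0 = 1`, `F 1 = 1`, `F 2 = 2`. -/
def F : ℕ → ℤ
  | 0 => 1
  | 1 => 1
  | (n+2) => F (n+1) + F n

/-- Numerical value of a binary digit. -/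
def bv (x : Bool) : ℤ := if x then 1 else 0

/-- Value of an odd-length binary word `w = w_{2k+1} ⋯ w_1` (most significant
digit first): `val_F(w) = Σ_{i=1}^{2k} w_i F_i − w_{2k+1} F_{2k}`. -/
def valF (w : List Bool) : ℤ :=
  (∑ i ∈ Finset.range (w.length - 1), bv (w.reverse.getD i false) * F (i+1))
    - bv (w.reverse.getD (w.length - 1) false) * F (w.length - 1)

/-- The word has no factor `11`. -/
def no11 (w : List Bool) : Prop :=
  List.Chain' (fun x y => ¬(x = true ∧ y = true)) w

/-- Words of the canonical representation language: odd length, no factor 11,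
not beginning with 000 nor with 101. -/
def IsRep (w : List Bool) : Prop :=
  Odd w.length ∧ no11 w ∧
    ¬ ([false, false, false] <+: w) ∧ ¬ ([true, false, true] <+: w)

/-- `Ik k = {i ∈ ℤ : −F_{2k} ≤ i < F_{2k+1}}`. -/
def Ik (k : ℕ) : Set ℤ := {i : ℤ | -F (2*k) ≤ i ∧ i < F (2*k+1)}

/-- Shifted version of `Ik` incorporating `I_{−1} = ∅`. -/
def Iext : ℕ → Set ℤ
  | 0 => ∅
  | (k+1) => Ik k

/-- The morphism `h : 0 ↦ 00, 1 ↦ 01, 2 ↦ 10` on single letters. -/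
def h3 : Fin 3 → List Bool
  | 0 => [false, false]
  | 1 => [false, true]
  | 2 => [true, false]

/-- The Fibonacci morphism `φ : a ↦ ab, b ↦ a` applied to a letter,
where `a` is encoded by `false` and `b` by `true`. -/
def phiL (c : Bool) : List Bool := if c then [false] else [false, true]

/-- The Fibonacci morphism `φ` on words. -/
def phi (w : List Bool) : List Bool := w.flatMap phiL

/-- `φ²` applied to a letter: `φ²(a) = aba`, `φ²(b) = ab`. -/
def phi2L (c : Bool) : List Bool := phi (phiL c)

/-- Transition function of the DFAO with states `{START, a, b}` where
`START = none`, `a = some false`, `b = some true`: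
`START →0 a`, `START →1 b`, `a →0 a`, `a →1 b`, `b →0 a`
(the unused transition from `b` on input `1` is set to `b`). -/
def step : Option Bool → Bool → Option Bool
  | none, c => some c
  | some false, c => some c
  | some true, false => some false
  | some true, true => some true

/-- The bi-infinite Fibonacci word `x = lim φ^{2k}(b.a)` is generated by the
DFAO reading the canonical Fibonacci representation: `x_n = A(rep_F(n))`
for all `n ∈ ℤ`. -/
lemma step_eq (q : Option Bool) (c : Bool) : step q c = some c := by
  rcases q with _ | b
  · rfl
  · cases b <;> cases c <;> rfl

lemma foldl_step (r : List Bool) (h : r ≠ []) :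
    r.reverse.foldl step none = some (r.headD false) := by
  rw [List.foldl_reverse]
  cases r with
  | nil => exact absurd rfl h
  | cons a t => simp [step_eq]

lemma phi_append (u v : List Bool) : phi (u ++ v) = phi u ++ phi v :=
  List.flatMap_append

lemma phi_iter_append (n : ℕ) (u v : List Bool) :
    phi^[n] (u ++ v) = phi^[n] u ++ phi^[n] v := by
  induction n generalizing u v with
  | zero => simp
  | succ n ih => rw [Function.iterate_succ_apply, Function.iterate_succ_apply,
      Function.iterate_succ_apply, phi_append, ih]

lemma phi_iter_nil (n : ℕ) : phi^[n] ([] : List Bool) = [] := by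
  induction n with
  | zero => rfl
  | succ n ih => rw [Function.iterate_succ_apply]; exact ih

lemma lens (n : ℕ) : ((phi^[n] [false]).length : ℤ) = F (n+1) ∧
    ((phi^[n] [true]).length : ℤ) = F n := by
  induction n with
  | zero => simp [F]
  | succ n ih =>
    have hfa : phi [false] = [false] ++ [true] := rfl
    have hfb : phi [true] = [false] := rfl
    refine ⟨?_, ?_⟩
    · rw [Function.iterate_succ_apply, hfa, phi_iter_append, List.length_append]
      push_cast
      rw [ih.1, ih.2, show n+1+1 = n+2 from rfl]
      show _ = F (n+1) + F n
      ring
    · rw [Function.iterate_succ_apply, hfb, ih.1]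

/-- Value (LSB-first) with the top digit complemented, at "shift level" s. -/
def Pv : List Bool → ℕ → ℤ
  | [], _ => 0
  | [t], s => (1 - bv t) * F (2*s)
  | d :: c :: r, s => bv d * F (2*s+1) + bv c * F (2*s+2) + Pv r (s+1)

/-- The word `φ^{2k}(b) ++ φ^{2k}(a)`, i.e. `x` on positions `[-F_{2k}, F_{2k+1})`. -/
def W (k : ℕ) : List Bool := (phi^[2*k]) [true] ++ (phi^[2*k]) [false]

lemma Pv_eq_sum : ∀ (k : ℕ) (r : List Bool), r.length = 2*k+1 → ∀ s : ℕ,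
    Pv r s = (∑ i ∈ Finset.range (r.length - 1), bv (r.getD i false) * F (i+1+2*s))
      + (1 - bv (r.getD (r.length - 1) false)) * F (r.length - 1 + 2*s) := by
  intro k
  induction k with
  | zero =>
    intro r hr s
    match r, hr with
    | [t], _ => simp [Pv]
  | succ k ih =>
    intro r hr s
    match r with
    | d :: c :: r' =>
      have hr' : r'.length = 2*k+1 := by simp at hr; omega
      have h1 : (d :: c :: r').length - 1 = (2*k+1) + 1 := by simp [hr']
      rw [h1]
      rw [Finset.sum_range_succ' _ (2*k+1), Finset.sum_range_succ' _ (2*k)]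
      simp only [List.getD_cons_succ, List.getD_cons_zero]
      have hsum : ∑ i ∈ Finset.range (2*k), bv (r'.getD i false) * F (i+1+1+1+2*s)
          = ∑ i ∈ Finset.range (2*k), bv (r'.getD i false) * F (i+1+2*(s+1)) := by
        apply Finset.sum_congr rfl
        intro i _
        congr 2
        omega
      rw [hsum]
      have htop : (2*k+1+1+2*s) = (2*k + 2*(s+1)) := by omega
      rw [htop]
      have := ih r' hr' (s+1)
      rw [hr'] at this
      simp only [Nat.add_sub_cancel] at this
      show Pv (d :: c :: r') s = _
      rw [Pv]
      rw [this]
      ring_nf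

lemma phi2a : phi (phi [false]) = [false, true, false] := rfl
lemma phi2b : phi (phi [true]) = [false, true] := rfl

lemma phi_iter_phi2 (n : ℕ) (t : List Bool) :
    phi^[n] (phi (phi t)) = phi^[n+2] t := by
  rw [show n+2 = (n+1)+1 from rfl, Function.iterate_succ_apply,
    Function.iterate_succ_apply]

lemma phi_phi_eq (t : List Bool) : phi (phi t) = phi^[2] t := by
  rw [show (2:ℕ) = 0+2 from rfl, ← phi_iter_phi2, Function.iterate_zero_apply]

lemma key : ∀ (k : ℕ) (r : List Bool), r.length = 2*k+1 →
    List.Chain' (fun x y => ¬(x = true ∧ y = true)) r →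
    ∃ p : ℕ, Pv r 0 = (p : ℤ) ∧ p < (W k).length ∧
      (W k).getD p false = r.headD false ∧
      ∀ s : ℕ, Pv r s = (((phi^[2*s]) ((W k).take p)).length : ℤ) := by
  intro k
  induction k with
  | zero =>
    intro r hr _
    have hW0 : W 0 = [true, false] := by simp [W]
    match r, hr with
    | [t], _ =>
      cases t with
      | true =>
        refine ⟨0, by simp [Pv, bv], by simp [hW0], by simp [hW0], ?_⟩
        intro s
        simp [Pv, bv, hW0, phi_iter_nil]
      | false =>
        refine ⟨1, ?_, by simp [hW0], by simp [hW0], ?_⟩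
        · show (1 - bv false) * F (2*0) = (1 : ℤ)
          simp [bv]; rfl
        · intro s
          show (1 - bv false) * F (2*s) = _
          rw [hW0, show List.take 1 [true, false] = [true] from rfl]
          rw [(lens (2*s)).2]
          simp [bv]
  | succ k ih =>
    intro r hr hch
    match r with
    | d :: c :: e :: r'' =>
      have hr' : (e :: r'').length = 2*k+1 := by simp at hr ⊢; omega
      obtain ⟨hdc, hch2⟩ := List.isChain_cons_cons.mp hch
      obtain ⟨hce, hch3⟩ := List.isChain_cons_cons.mp hch2
      obtain ⟨p', hp0, hplt, hpget, hpall⟩ := ih (e :: r'') hr' hch2.tail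
      have hpe : (W k).getD p' false = e := by simpa using hpget
      -- decomposition of W (k+1)
      have hWsucc : W (k+1) = phi (phi (W k)) := by
        show (phi^[2*(k+1)]) [true] ++ (phi^[2*(k+1)]) [false] = _
        rw [show 2*(k+1) = 2*k+1+1 from by ring, Function.iterate_succ_apply',
          Function.iterate_succ_apply', Function.iterate_succ_apply',
          Function.iterate_succ_apply', ← phi_append, ← phi_append]
        rfl
      have hsplitW : W k = (W k).take p' ++ ([e] ++ (W k).drop (p'+1)) := by
        conv_lhs => rw [← List.take_append_drop p' (W k)]
        congr 1
        rw [List.drop_eq_getElem_cons hplt]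
        congr 1
        rw [← hpe, List.getD_eq_getElem _ _ hplt]
      set A : List Bool := phi (phi ((W k).take p')) with hA
      set Cc : List Bool := phi (phi ((W k).drop (p'+1))) with hC
      set blk : List Bool := phi (phi [e]) with hblk
      have hWdecomp : W (k+1) = A ++ (blk ++ Cc) := by
        rw [hWsucc]
        conv_lhs => rw [hsplitW]
        rw [phi_append, phi_append, phi_append, phi_append]
      set off : ℕ := (if c then 2 else 0) + (if d then 1 else 0) with hoff
      -- basic blk facts
      have hblk_cases : blk = [false, true, false] ∨ blk = [false, true] := by
        cases e
        · exact Or.inl (by rw [hblk]; rfl)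
        · exact Or.inr (by rw [hblk]; rfl)
      have hofflt : off < blk.length := by
        by_cases hc : c = true
        · have hd : d = false := by
            cases d
            · rfl
            · exact absurd ⟨rfl, hc⟩ hdc
          have he : e = false := by
            cases e
            · rfl
            · exact absurd ⟨hc, rfl⟩ hce
          rw [hblk, he]
          simp [hoff, hc, hd, phi2a]
        · rcases hblk_cases with h | h <;>
            simp [hoff, hc, h] <;> split <;> omega
      -- length of the offset part under all shifts
      have hblen : ∀ s : ℕ, ((phi^[2*s] (blk.take off)).length : ℤ)
          = bv d * F (2*s+1) + bv c * F (2*s+2) := by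
        intro s
        by_cases hc : c = true
        · have hd : d = false := by
            cases d
            · rfl
            · exact absurd ⟨rfl, hc⟩ hdc
          have he : e = false := by
            cases e
            · rfl
            · exact absurd ⟨hc, rfl⟩ hce
          have hoff2 : off = 2 := by simp [hoff, hc, hd]
          rw [hblk, he, phi2a, hoff2]
          rw [show List.take 2 [false, true, false] = [false] ++ [true] from rfl]
          rw [phi_iter_append, List.length_append]
          push_cast
          rw [(lens (2*s)).1, (lens (2*s)).2]
          rw [show F (2*s+2) = F (2*s+1) + F (2*s) from rfl]
          simp [bv, hc, hd]
        · by_cases hd : d = true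
          · have hoff1 : off = 1 := by simp [hoff, hc, hd]
            have htake : blk.take 1 = [false] := by
              rcases hblk_cases with h | h <;> rw [h] <;> rfl
            rw [hoff1, htake, (lens (2*s)).1]
            simp [bv, hc, hd]
          · have hoff0 : off = 0 := by simp [hoff, hc, hd]
            rw [hoff0]
            simp [phi_iter_nil, bv, hc, hd]
      -- letter at the offset
      have hgd : blk.getD off false = d := by
        by_cases hc : c = true
        · have hd : d = false := by
            cases d
            · rfl
            · exact absurd ⟨rfl, hc⟩ hdc
          have he : e = false := by
            cases e
            · rfl
            · exact absurd ⟨hc, rfl⟩ hce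
          have hoff2 : off = 2 := by simp [hoff, hc, hd]
          rw [hblk, he, phi2a, hoff2, hd]
          rfl
        · by_cases hd : d = true
          · have hoff1 : off = 1 := by simp [hoff, hc, hd]
            rcases hblk_cases with h | h <;> rw [h, hoff1, hd] <;> rfl
          · have hoff0 : off = 0 := by simp [hoff, hc, hd]
            have hd' : d = false := by cases d; rfl; exact absurd rfl hd
            rcases hblk_cases with h | h <;> rw [h, hoff0, hd'] <;> rfl
      refine ⟨A.length + off, ?_, ?_, ?_, ?_⟩
      · -- Pv r 0 = p
        show bv d * F (2*0+1) + bv c * F (2*0+2) + Pv (e :: r'') (0+1) = _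
        rw [hpall 1]
        have hA2 : A.length = ((phi^[2*1]) ((W k).take p')).length := by
          rw [hA, phi_phi_eq, show 2*1 = 2 from rfl]
        push_cast
        rw [← hA2]
        have : bv d * F (2*0+1) + bv c * F (2*0+2) = (off : ℤ) := by
          have hF1 : F (2*0+1) = 1 := rfl
          have hF2 : F (2*0+2) = 2 := rfl
          rw [hF1, hF2]
          cases d <;> cases c <;> simp [bv, hoff]
        rw [this]
        ring
      · -- bound
        rw [hWdecomp]
        simp only [List.length_append]
        have : off < blk.length + Cc.length := by omega
        omega
      · -- letter
        rw [hWdecomp, List.getD_append_right _ _ _ _ (Nat.le_add_right _ _)]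
        rw [Nat.add_sub_cancel_left]
        rw [List.getD_append _ _ _ _ hofflt, hgd]
        rfl
      · -- all shifts
        intro s
        show bv d * F (2*s+1) + bv c * F (2*s+2) + Pv (e :: r'') (s+1) = _
        rw [hpall (s+1), hWdecomp, List.take_length_add_append off]
        rw [List.take_append_of_le_length (le_of_lt hofflt)]
        rw [phi_iter_append, List.length_append]
        push_cast
        rw [← hblen s]
        have hA2 : ((phi^[2*s]) A).length = ((phi^[2*(s+1)]) ((W k).take p')).length := by
          rw [hA, phi_iter_phi2, show 2*s+2 = 2*(s+1) from by ring]
        rw [hA2]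
        ring


theorem dfao_computes_fixed_point
    (repF : ℤ → List Bool)
    (hrep : ∀ n : ℤ, IsRep (repF n) ∧ valF (repF n) = n)
    (x : ℤ → Bool)
    (hxpos : ∀ k : ℕ, ∀ n : ℤ, 0 ≤ n → n < ((phi^[2*k]) [false]).length →
      x n = ((phi^[2*k]) [false]).getD n.toNat false)
    (hxneg : ∀ k : ℕ, ∀ n : ℤ, -(((phi^[2*k]) [true]).length : ℤ) ≤ n → n < 0 →
      x n = ((phi^[2*k]) [true]).getD
              ((((phi^[2*k]) [true]).length : ℤ) + n).toNat false) :
    ∀ n : ℤ, (repF n).foldl step none = some (x n) := by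
  intro n
  obtain ⟨⟨hodd, h11, -, -⟩, hval⟩ := hrep n
  set w := repF n with hw
  obtain ⟨k, hk⟩ : ∃ k, w.length = 2*k+1 := by
    obtain ⟨m, hm⟩ := hodd
    exact ⟨m, by omega⟩
  set r := w.reverse with hr
  have hrlen : r.length = 2*k+1 := by rw [hr, List.length_reverse]; exact hk
  have hchain : List.Chain' (fun x y => ¬(x = true ∧ y = true)) r := by
    rw [hr]; show List.IsChain _ w.reverse; rw [List.isChain_reverse]
    exact h11.imp (fun {a b} h hab => h ⟨hab.2, hab.1⟩)
  obtain ⟨p, hp0, hplt, hpget, -⟩ := key k r hrlen hchain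
  -- connect valF to Pv
  have hval2 : Pv r 0 = n + F (2*k) := by
    rw [Pv_eq_sum k r hrlen 0]
    rw [hrlen]
    simp only [Nat.add_sub_cancel]
    rw [← hval]
    unfold valF
    rw [← hr, hk]
    simp only [Nat.add_sub_cancel]
    have h1 : ∀ i : ℕ, (i+1+2*0) = i+1 := by intro i; omega
    have h2 : (2*k + 2*0) = 2*k := by omega
    rw [h2]
    have h3 : ∑ i ∈ Finset.range (2*k), bv (r.getD i false) * F (i+1+2*0)
        = ∑ i ∈ Finset.range (2*k), bv (r.getD i false) * F (i+1) := by
      apply Finset.sum_congr rfl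
      intro i _
      rw [h1 i]
    rw [h3]
    ring
  have hpn : (p : ℤ) = n + F (2*k) := by rw [← hp0, hval2]
  have hltZ : ((phi^[2*k] [true]).length : ℤ) = F (2*k) := (lens (2*k)).2
  have hlfZ : ((phi^[2*k] [false]).length : ℤ) = F (2*k+1) := (lens (2*k)).1
  have hWlen : (W k).length = (phi^[2*k] [true]).length + (phi^[2*k] [false]).length := by
    rw [W, List.length_append]
  have hWk : W k = (phi^[2*k]) [true] ++ (phi^[2*k]) [false] := rfl
  have hx : x n = r.headD false := by
    by_cases hn0 : 0 ≤ n
    · have h1 : (phi^[2*k] [true]).length ≤ p := by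
        have : ((phi^[2*k] [true]).length : ℤ) ≤ (p : ℤ) := by
          rw [hltZ, hpn]; linarith
        exact_mod_cast this
      have hq : ((p : ℤ) - (phi^[2*k] [true]).length) = n := by
        rw [hltZ, hpn]; ring
      have hnlt : n < ((phi^[2*k]) [false]).length := by
        have : (p : ℤ) < ((W k).length : ℤ) := by exact_mod_cast hplt
        rw [hWlen] at this
        push_cast at this
        omega
      rw [hxpos k n hn0 hnlt, ← hpget, hWk,
        List.getD_append_right _ _ _ _ h1]
      congr 1
      omega
    · push_neg at hn0
      have h1 : p < (phi^[2*k] [true]).length := by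
        have : (p : ℤ) < ((phi^[2*k] [true]).length : ℤ) := by
          rw [hltZ, hpn]; linarith
        exact_mod_cast this
      have hge : -(((phi^[2*k]) [true]).length : ℤ) ≤ n := by
        rw [hltZ]
        have : (0 : ℤ) ≤ (p : ℤ) := Int.natCast_nonneg p
        linarith [hpn]
      rw [hxneg k n hge hn0, ← hpget, hWk, List.getD_append _ _ _ _ h1]
      congr 1
      rw [hltZ]
      omega
  have hne : r ≠ [] := by
    intro h
    rw [h] at hrlen
    simp at hrlen
  calc w.foldl step none = r.reverse.foldl step none := by rw [hr, List.reverse_reverse]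
    _ = some (r.headD false) := foldl_step r hne
    _ = some (x n) := by rw [hx]
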